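/- Up to isomorphism, the unique configuration of four one-dimensional subtori through the origin in a complex abelian surface, pairwise intersecting only at the origin, is given by Y = C × C with C = ℂ/(ℤ+ℤτ), τ = e^{πi/3}, and the four curves w = 0, z = 0, w = z, w = τz. -/

import Mathlib

open Complex

noncomputable section UniqueGoodConfigAux

/-- `τ = e^{πi/3}` as an explicit complex number. -/
def tauC : ℂ := ⟨1/2, Real.sqrt 3 / 2⟩

lemma tauC_re : tauC.re = 1/2 := rfl
lemma tauC_im : tauC.im = Real.sqrt 3 / 2 := rfl

lemma sq_sqrt3 : Real.sqrt 3 ^ 2 = 3 := Real.sq_sqrt (by norm_num)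

lemma sqrt3_mul_self : Real.sqrt 3 * Real.sqrt 3 = 3 := Real.mul_self_sqrt (by norm_num)

lemma tauC_ne_zero : tauC ≠ 0 := by
  intro h
  have : tauC.im = 0 := by rw [h]; rfl
  rw [tauC_im] at this
  nlinarith [sqrt3_mul_self]

lemma tauC_sq : tauC ^ 2 = tauC - 1 := by
  apply Complex.ext <;>
    simp [pow_two, Complex.mul_re, Complex.mul_im, tauC_re, tauC_im, Complex.sub_re,
      Complex.sub_im, Complex.one_re, Complex.one_im] <;> nlinarith [sq_sqrt3]

lemma exp_pi_third : Complex.exp (Real.pi * I / 3) = tauC := by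
  rw [show ((Real.pi : ℂ) * I / 3 : ℂ) = ((Real.pi/3 : ℝ) : ℂ) * I by push_cast; ring,
    Complex.exp_mul_I, ← Complex.ofReal_cos, ← Complex.ofReal_sin,
    Real.cos_pi_div_three, Real.sin_pi_div_three]
  apply Complex.ext <;> simp [tauC_re, tauC_im]

lemma mu_cases {μ : ℂ} (h1 : ‖μ‖ = 1) (h2 : ‖1 - μ‖ = 1) :
    μ = tauC ∨ μ = 1 - tauC := by
  have e1 : μ.re * μ.re + μ.im * μ.im = 1 := by
    have := Complex.sq_norm μ
    rw [h1] at this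
    simpa [Complex.normSq_apply] using this.symm
  have e2 : (1 - μ.re) * (1 - μ.re) + μ.im * μ.im = 1 := by
    have := Complex.sq_norm (1 - μ)
    rw [h2] at this
    simpa [Complex.normSq_apply, Complex.sub_re, Complex.sub_im] using this.symm
  have hre : μ.re = 1/2 := by nlinarith
  have : (μ.im - Real.sqrt 3 / 2) * (μ.im + Real.sqrt 3 / 2) = 0 := by
    nlinarith [sq_sqrt3]
  rcases mul_eq_zero.mp this with h | h
  · left; apply Complex.ext
    · simp [hre, tauC_re]
    · simp [tauC_im]; linarith
  · right; apply Complex.ext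
    · simp [hre, tauC_re, Complex.sub_re]; norm_num
    · simp [tauC_im, Complex.sub_im]; linarith

lemma round_close (z : ℂ) : ∃ p q : ℤ, ‖z - ((p : ℂ) + (q : ℂ) * tauC)‖ < 1 := by
  have hs3 : Real.sqrt 3 ^ 2 = 3 := sq_sqrt3
  have hs3pos : 0 < Real.sqrt 3 := Real.sqrt_pos.mpr (by norm_num)
  set aq : ℝ := z.re - z.im / Real.sqrt 3 with haq
  set bq : ℝ := 2 * z.im / Real.sqrt 3 with hbq
  refine ⟨round aq, round bq, ?_⟩
  set x : ℝ := aq - round aq with hx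
  set y : ℝ := bq - round bq with hy
  have hxb : |x| ≤ 1/2 := abs_sub_round aq
  have hyb : |y| ≤ 1/2 := abs_sub_round bq
  set e : ℂ := z - ((round aq : ℂ) + (round bq : ℂ) * tauC) with he
  have hre : e.re = x + y / 2 := by
    simp only [he, Complex.sub_re, Complex.add_re, Complex.mul_re, Complex.intCast_re,
      Complex.intCast_im, tauC_re, tauC_im, hx, hy, haq, hbq]
    field_simp
    ring
  have him : e.im = y * (Real.sqrt 3 / 2) := by
    simp only [he, Complex.sub_im, Complex.add_im, Complex.mul_im, Complex.intCast_re,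
      Complex.intCast_im, tauC_re, tauC_im, hx, hy, hbq]
    field_simp
    ring
  have hn : ‖e‖ ^ 2 ≤ 3/4 := by
    rw [Complex.sq_norm, Complex.normSq_apply, hre, him]
    have hyy : y * (Real.sqrt 3 / 2) * (y * (Real.sqrt 3 / 2)) = 3/4 * (y*y) := by
      linear_combination (y * y / 4) * sqrt3_mul_self
    rw [hyy]
    have h1 := abs_le.mp hxb
    have h2 := abs_le.mp hyb
    nlinarith [sq_nonneg (x + y), sq_nonneg (x - y)]
  nlinarith [norm_nonneg e]

/-- a nonzero element of minimal norm -/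
lemma exists_min_elt (Λ : AddSubgroup ℂ)
    (hfin : ∀ R : ℝ, {z : ℂ | z ∈ Λ ∧ ‖z‖ ≤ R}.Finite)
    (x₀ : ℂ) (hx₀ : x₀ ∈ Λ) (hx₀0 : x₀ ≠ 0) :
    ∃ m, m ∈ Λ ∧ m ≠ 0 ∧ ∀ y ∈ Λ, y ≠ 0 → ‖m‖ ≤ ‖y‖ := by
  have hfin' : {z : ℂ | z ∈ Λ ∧ ‖z‖ ≤ ‖x₀‖ ∧ z ≠ 0}.Finite := by
    apply (hfin (‖x₀‖)).subset
    rintro z ⟨h1, h2, _⟩; exact ⟨h1, h2⟩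
  have hne : {z : ℂ | z ∈ Λ ∧ ‖z‖ ≤ ‖x₀‖ ∧ z ≠ 0}.Nonempty :=
    ⟨x₀, hx₀, le_refl _, hx₀0⟩
  obtain ⟨m, hm, hmin⟩ := Set.exists_min_image _ (fun z : ℂ => ‖z‖) hfin' hne
  refine ⟨m, hm.1, hm.2.2, fun y hy hy0 => ?_⟩
  by_cases hle : ‖y‖ ≤ ‖x₀‖
  · exact hmin y ⟨hy, hle, hy0⟩
  · exact le_trans hm.2.1 (le_of_not_ge hle)

lemma abs_eq_one_of_mul_self (Λ : AddSubgroup ℂ) {m μ : ℂ}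
    (hm : m ∈ Λ) (hm0 : m ≠ 0)
    (hmin : ∀ y ∈ Λ, y ≠ 0 → ‖m‖ ≤ ‖y‖)
    (hμ0 : μ ≠ 0) (hμ : ∀ z, z ∈ Λ ↔ μ * z ∈ Λ) : ‖μ‖ = 1 := by
  have h1 : ‖m‖ ≤ ‖μ * m‖ :=
    hmin _ ((hμ m).1 hm) (mul_ne_zero hμ0 hm0)
  have h2 : ‖m‖ ≤ ‖μ⁻¹ * m‖ := by
    apply hmin
    · apply (hμ _).2
      rw [show μ * (μ⁻¹ * m) = m by field_simp]
      exact hm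
    · exact mul_ne_zero (inv_ne_zero hμ0) hm0
  rw [norm_mul] at h1
  rw [norm_mul, norm_inv] at h2
  have hmpos : 0 < ‖m‖ := by
    simpa [norm_pos_iff] using hm0
  have hμpos : 0 < ‖μ‖ := by
    simpa [norm_pos_iff] using hμ0
  have ha : 1 ≤ ‖μ‖ := by
    by_contra h
    push_neg at h
    nlinarith
  have hb : ‖μ‖ ≤ 1 := by
    rw [inv_mul_eq_div, le_div_iff₀ hμpos] at h2
    nlinarith
  linarith

/-- classification: a subgroup of ℂ stable under multiplication by τ, with a minimal
nonzero vector m, equals (ℤ + ℤτ) m -/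
lemma lattice_classify (Λ : AddSubgroup ℂ)
    (hτ : ∀ z ∈ Λ, tauC * z ∈ Λ) {m : ℂ} (hm : m ∈ Λ) (hm0 : m ≠ 0)
    (hmin : ∀ y ∈ Λ, y ≠ 0 → ‖m‖ ≤ ‖y‖) :
    ∀ z, z ∈ Λ ↔ ∃ p q : ℤ, z = ((p : ℂ) + (q : ℂ) * tauC) * m := by
  have hmem : ∀ (p q : ℤ), ((p : ℂ) + (q : ℂ) * tauC) * m ∈ Λ := by
    intro p q
    have h1 : (p : ℂ) * m = (p : ℤ) • m := by simp [zsmul_eq_mul]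
    have h2 : (q : ℂ) * (tauC * m) = (q : ℤ) • (tauC * m) := by simp [zsmul_eq_mul]
    have : ((p : ℂ) + (q : ℂ) * tauC) * m = (p : ℤ) • m + (q : ℤ) • (tauC * m) := by
      rw [← h1, ← h2]; ring
    rw [this]
    exact AddSubgroup.add_mem _ (AddSubgroup.zsmul_mem _ hm _)
      (AddSubgroup.zsmul_mem _ (hτ m hm) _)
  intro z
  constructor
  · intro hz
    obtain ⟨p, q, hpq⟩ := round_close (z / m)
    refine ⟨p, q, ?_⟩
    set r : ℂ := z - ((p : ℂ) + (q : ℂ) * tauC) * m with hr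
    have hrΛ : r ∈ Λ := AddSubgroup.sub_mem _ hz (hmem p q)
    have habs : ‖r‖ < ‖m‖ := by
      have : r = (z / m - ((p : ℂ) + (q : ℂ) * tauC)) * m := by
        rw [hr]; field_simp
      rw [this, norm_mul]
      have hmpos : 0 < ‖m‖ := by simpa [norm_pos_iff] using hm0
      calc ‖z / m - ((p : ℂ) + (q : ℂ) * tauC)‖ * ‖m‖
          < 1 * ‖m‖ := mul_lt_mul_of_pos_right hpq hmpos
        _ = ‖m‖ := one_mul _
    have hr0 : r = 0 := by
      by_contra h
      exact absurd habs (not_lt.mpr (hmin r hrΛ h))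
    exact sub_eq_zero.mp hr0
  · rintro ⟨p, q, rfl⟩
    exact hmem p q

lemma lattice_inter_finite (Γ : AddSubgroup (ℂ × ℂ)) (b : Fin 4 → ℂ × ℂ)
    (hb : LinearIndependent ℝ b)
    (hset : (Γ : Set (ℂ × ℂ)) = {x | ∃ c : Fin 4 → ℤ, x = ∑ i, c i • b i}) :
    ∀ K : Set (ℂ × ℂ), Bornology.IsBounded K → ((Γ : Set (ℂ × ℂ)) ∩ K).Finite := by
  intro K hK
  have hcard : Fintype.card (Fin 4) = Module.finrank ℝ (ℂ × ℂ) := by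
    simp [Module.finrank_prod, Complex.finrank_real_complex]
  let B : Module.Basis (Fin 4) ℝ (ℂ × ℂ) := basisOfLinearIndependentOfCardEqFinrank hb hcard
  have hBcoe : ⇑B = b := coe_basisOfLinearIndependentOfCardEqFinrank hb hcard
  have hΓS : (Γ : Set (ℂ × ℂ)) = ↑(Submodule.span ℤ (Set.range ⇑B)) := by
    rw [hset]
    ext x
    simp only [Set.mem_setOf_eq, SetLike.mem_coe, hBcoe]
    rw [Submodule.mem_span_range_iff_exists_fun]
    constructor
    · rintro ⟨c, rfl⟩; exact ⟨c, rfl⟩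
    · rintro ⟨c, rfl⟩; exact ⟨c, rfl⟩
  rw [hΓS, Set.inter_comm]
  have hd : DiscreteTopology (Submodule.span ℤ (Set.range ⇑B)) := inferInstance
  have hdset : DiscreteTopology ↥(↑(Submodule.span ℤ (Set.range ⇑B)) : Set (ℂ × ℂ)) := hd
  have hclosed : IsClosed (↑(Submodule.span ℤ (Set.range ⇑B)) : Set (ℂ × ℂ)) := by
    have : DiscreteTopology (Submodule.span ℤ (Set.range ⇑B)).toAddSubgroup := hd
    exact AddSubgroup.isClosed_of_discrete (H := (Submodule.span ℤ (Set.range ⇑B)).toAddSubgroup)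
  exact Metric.finite_isBounded_inter_isClosed DiscreteTopology.isDiscrete hK hclosed

def lmap (A B C D : ℂ) : (ℂ × ℂ) →ₗ[ℂ] (ℂ × ℂ) where
  toFun p := (A * p.1 + B * p.2, C * p.1 + D * p.2)
  map_add' := by
    rintro ⟨a, b⟩ ⟨c, d⟩
    simp only [Prod.fst_add, Prod.snd_add, Prod.mk_add_mk, Prod.mk.injEq]
    constructor <;> ring
  map_smul' := by
    rintro r ⟨a, b⟩
    simp only [Prod.smul_fst, Prod.smul_snd, Prod.smul_mk, smul_eq_mul, RingHom.id_apply,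
      Prod.mk.injEq]
    constructor <;> ring

@[simp] lemma lmap_apply (A B C D z w : ℂ) :
    lmap A B C D (z, w) = (A * z + B * w, C * z + D * w) := rfl

def lequiv (A B C D : ℂ) (h : A * D - B * C ≠ 0) : (ℂ × ℂ) ≃ₗ[ℂ] (ℂ × ℂ) :=
  LinearEquiv.ofLinear (lmap A B C D)
    (lmap (D / (A * D - B * C)) (-(B / (A * D - B * C)))
      (-(C / (A * D - B * C))) (A / (A * D - B * C)))
    (by
      apply LinearMap.ext
      rintro ⟨z, w⟩
      simp only [LinearMap.comp_apply, lmap_apply, LinearMap.id_apply, Prod.mk.injEq]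
      constructor
      · linear_combination z * mul_inv_cancel₀ h
      · linear_combination w * mul_inv_cancel₀ h)
    (by
      apply LinearMap.ext
      rintro ⟨z, w⟩
      simp only [LinearMap.comp_apply, lmap_apply, LinearMap.id_apply, Prod.mk.injEq]
      constructor
      · linear_combination z * mul_inv_cancel₀ h
      · linear_combination w * mul_inv_cancel₀ h)

@[simp] lemma lequiv_apply (A B C D : ℂ) (h : A * D - B * C ≠ 0) (z w : ℂ) :
    lequiv A B C D h (z, w) = (A * z + B * w, C * z + D * w) := rfl

end UniqueGoodConfigAux

open Complex in
/-- Up to isomorphism, the unique configuration of four one-dimensional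
subtori through the origin of a complex abelian surface `Y = ℂ²/Γ`, pairwise intersecting
only at the origin, is `Y = C × C` with `C = ℂ/(ℤ + ℤτ)`, `τ = e^{πi/3}`, and the four
curves `w = 0`, `z = 0`, `w = z`, `w = τz`.  The subtori are modelled as images under the
quotient map `π` of one-dimensional complex subspaces `W i ⊆ ℂ²` each meeting the lattice
`Γ` in a rank-two subgroup (so that the image is a compact elliptic curve); the conclusion
produces a ℂ-linear isomorphism of `ℂ²` carrying `Γ` to the product lattice
`(ℤ + ℤτ) × (ℤ + ℤτ)` and the four subspaces to the four standard lines
`span(0,1), span(1,0), span(1,1), span(τ,1)`. -/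
theorem unique_good_configuration (Γ : AddSubgroup (ℂ × ℂ))
    (hΓ : ∃ b : Fin 4 → ℂ × ℂ, LinearIndependent ℝ b ∧
      (Γ : Set (ℂ × ℂ)) = {x | ∃ c : Fin 4 → ℤ, x = ∑ i, c i • b i})
    (π : (ℂ × ℂ) →+ (ℂ × ℂ) ⧸ Γ) (hπ : π = QuotientAddGroup.mk' Γ)
    (W : Fin 4 → Submodule ℂ (ℂ × ℂ))
    (hrank : ∀ i, Module.finrank ℂ (W i) = 1)
    (hcompact : ∀ i, ∃ v w : ℂ × ℂ, LinearIndependent ℝ ![v, w] ∧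
      v ∈ W i ∧ v ∈ Γ ∧ w ∈ W i ∧ w ∈ Γ)
    (hpair : ∀ i j, i ≠ j →
      (π '' (W i : Set (ℂ × ℂ))) ∩ (π '' (W j : Set (ℂ × ℂ))) = {0}) :
    ∃ f : (ℂ × ℂ) ≃ₗ[ℂ] (ℂ × ℂ),
      (⇑f '' (Γ : Set (ℂ × ℂ)) =
        {p : ℂ × ℂ |
          (∃ m n : ℤ, p.1 = (m : ℂ) + n * Complex.exp (Real.pi * I / 3)) ∧
          (∃ m n : ℤ, p.2 = (m : ℂ) + n * Complex.exp (Real.pi * I / 3))}) ∧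
      (Set.range (fun i => Submodule.map (f : (ℂ × ℂ) →ₗ[ℂ] (ℂ × ℂ)) (W i)) =
        {Submodule.span ℂ {((0 : ℂ), (1 : ℂ))},
         Submodule.span ℂ {((1 : ℂ), (0 : ℂ))},
         Submodule.span ℂ {((1 : ℂ), (1 : ℂ))},
         Submodule.span ℂ {(Complex.exp (Real.pi * I / 3), (1 : ℂ))}}) := by
  obtain ⟨b, hbli, hbset⟩ := hΓ
  -- choose generators
  have hv : ∀ i, ∃ x : ℂ × ℂ, x ∈ W i ∧ x ∈ Γ ∧ x ≠ 0 := by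
    intro i
    obtain ⟨x, w, hli, hxW, hxΓ, _, _⟩ := hcompact i
    refine ⟨x, hxW, hxΓ, ?_⟩
    have := hli.ne_zero 0
    simpa using this
  choose v hvW hvΓ hv0 using hv
  -- each W i is the line spanned by v i
  have hW : ∀ i, W i = Submodule.span ℂ {v i} := by
    intro i
    symm
    apply Submodule.eq_of_le_of_finrank_eq
    · rw [Submodule.span_le, Set.singleton_subset_iff]
      exact hvW i
    · rw [finrank_span_singleton (hv0 i), hrank i]
  -- Γ is countable
  have hcnt : (Γ : Set (ℂ × ℂ)).Countable := by
    rw [hbset]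
    have : {x : ℂ × ℂ | ∃ c : Fin 4 → ℤ, x = ∑ i, c i • b i} =
        Set.range (fun c : Fin 4 → ℤ => ∑ i, c i • b i) := by
      ext x; simp [Set.mem_range, eq_comm]
    rw [this]
    exact Set.countable_range _
  -- each line contains a point outside Γ
  have hexw : ∀ i, ∃ x, x ∈ W i ∧ x ∉ Γ := by
    intro i
    by_contra h
    push_neg at h
    have hsub : Set.range (fun t : ℝ => (t : ℂ) • v i) ⊆ (Γ : Set (ℂ × ℂ)) := by
      rintro _ ⟨t, rfl⟩
      exact h _ (Submodule.smul_mem _ _ (hvW i))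
    have hcr : (Set.range (fun t : ℝ => (t : ℂ) • v i)).Countable := hcnt.mono hsub
    have hinj : Function.Injective (fun t : ℝ => (t : ℂ) • v i) := by
      intro s t hst
      simp only at hst
      have h2 := smul_left_injective ℂ (hv0 i) hst
      exact_mod_cast h2
    have huniv : (Set.univ : Set ℝ).Countable := by
      rw [← Set.preimage_range (fun t : ℝ => (t : ℂ) • v i)]
      exact hcr.preimage hinj
    have : Countable ℝ := Set.countable_univ_iff.mp huniv
    exact absurd this (not_countable)
  -- the lines are pairwise distinct
  have hWne : ∀ i j, i ≠ j → W i ≠ W j := by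
    intro i j hij heq
    obtain ⟨x, hxW, hxΓ⟩ := hexw i
    have hx1 : π x ∈ π '' (W i : Set (ℂ × ℂ)) := ⟨x, hxW, rfl⟩
    have hx2 : π x ∈ π '' (W j : Set (ℂ × ℂ)) := by rw [← heq]; exact hx1
    have h0 : π x ∈ ({0} : Set ((ℂ × ℂ) ⧸ Γ)) := by
      rw [← hpair i j hij]; exact ⟨hx1, hx2⟩
    have h0' : π x = 0 := h0
    rw [hπ] at h0'
    exact hxΓ ((QuotientAddGroup.eq_zero_iff x).mp h0')
  -- pairwise determinants are nonzero
  have hdet : ∀ i j, i ≠ j → (v i).1 * (v j).2 - (v i).2 * (v j).1 ≠ 0 := by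
    intro i j hij h0
    have hmem : v j ∈ Submodule.span ℂ {v i} := by
      rw [Submodule.mem_span_singleton]
      by_cases h1 : (v i).1 = 0
      · have h2 : (v i).2 ≠ 0 := by
          intro h2
          exact hv0 i (Prod.ext h1 h2)
        refine ⟨(v j).2 / (v i).2, ?_⟩
        have hj1 : (v j).1 = 0 := by
          have hmul : (v i).2 * (v j).1 = 0 := by linear_combination (v j).2 * h1 - h0
          rcases mul_eq_zero.mp hmul with h | h
          · exact absurd h h2
          · exact h
        apply Prod.ext
        · simp [Prod.smul_fst, smul_eq_mul, h1, hj1]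
        · simp only [Prod.smul_snd, smul_eq_mul]
          rw [div_mul_cancel₀ _ h2]
      · refine ⟨(v j).1 / (v i).1, ?_⟩
        apply Prod.ext
        · simp only [Prod.smul_fst, smul_eq_mul]
          rw [div_mul_cancel₀ _ h1]
        · simp only [Prod.smul_snd, smul_eq_mul]
          rw [div_mul_eq_mul_div, div_eq_iff h1]
          linear_combination -h0
    have hle : W j ≤ W i := by
      rw [hW i, hW j]
      exact Submodule.span_le.mpr (Set.singleton_subset_iff.mpr hmem)
    have : W j = W i := Submodule.eq_of_le_of_finrank_eq hle (by rw [hrank, hrank])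
    exact hWne j i (Ne.symm hij) this
  -- decomposition along two lines
  have hdecomp : ∀ i j, i ≠ j → ∀ x : ℂ × ℂ, ∃ s t : ℂ, x = s • v i + t • v j := by
    intro i j hij x
    have h := hdet i j hij
    refine ⟨(x.1 * (v j).2 - x.2 * (v j).1) / ((v i).1 * (v j).2 - (v i).2 * (v j).1),
      ((v i).1 * x.2 - (v i).2 * x.1) / ((v i).1 * (v j).2 - (v i).2 * (v j).1), ?_⟩
    apply Prod.ext
    · simp only [Prod.fst_add, Prod.smul_fst, smul_eq_mul]
      linear_combination (-x.1) * mul_inv_cancel₀ h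
    · simp only [Prod.snd_add, Prod.smul_snd, smul_eq_mul]
      linear_combination (-x.2) * mul_inv_cancel₀ h
  -- splitting of lattice points along two of the lines
  have hsplit : ∀ i j, i ≠ j → ∀ x, x ∈ Γ →
      ∃ s t : ℂ, x = s • v i + t • v j ∧ s • v i ∈ Γ ∧ t • v j ∈ Γ := by
    intro i j hij x hx
    obtain ⟨s, t, hst⟩ := hdecomp i j hij x
    have haW : s • v i ∈ W i := Submodule.smul_mem _ _ (hvW i)
    have hbW : t • v j ∈ W j := Submodule.smul_mem _ _ (hvW j)
    have hx0 : π x = 0 := by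
      rw [hπ]
      exact (QuotientAddGroup.eq_zero_iff x).mpr hx
    have hsum : π (s • v i) + π (t • v j) = 0 := by
      rw [← map_add, ← hst, hx0]
    have hπa : π (s • v i) ∈ (π '' (W i : Set (ℂ × ℂ))) ∩ (π '' (W j : Set (ℂ × ℂ))) := by
      constructor
      · exact ⟨_, haW, rfl⟩
      · refine ⟨-(t • v j), Submodule.neg_mem _ hbW, ?_⟩
        rw [map_neg]
        exact neg_eq_of_add_eq_zero_left hsum
    have h0 : π (s • v i) = 0 := by
      rw [hpair i j hij] at hπa
      exact hπa
    have haΓ : s • v i ∈ Γ := by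
      rw [hπ] at h0
      exact (QuotientAddGroup.eq_zero_iff _).mp h0
    have hbΓ : t • v j ∈ Γ := by
      have heq : t • v j = x - s • v i := by
        rw [hst]; abel
      rw [heq]
      exact AddSubgroup.sub_mem _ hx haΓ
    exact ⟨s, t, hst, haΓ, hbΓ⟩
  -- set up coordinates: M sends (s,t) to s • v 1 + t • v 0
  have hdet10 : (v 1).1 * (v 0).2 - (v 0).1 * (v 1).2 ≠ 0 := by
    intro h
    apply hdet 1 0 (by decide)
    linear_combination h
  set M : (ℂ × ℂ) ≃ₗ[ℂ] (ℂ × ℂ) := lequiv (v 1).1 (v 0).1 (v 1).2 (v 0).2 hdet10 with hM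
  have hMst : ∀ s t : ℂ, M (s, t) = s • v 1 + t • v 0 := by
    intro s t
    rw [hM, lequiv_apply]
    apply Prod.ext
    · simp only [Prod.fst_add, Prod.smul_fst, smul_eq_mul]; ring
    · simp only [Prod.snd_add, Prod.smul_snd, smul_eq_mul]; ring
  have hMv1 : M (1, 0) = v 1 := by rw [hMst]; simp
  have hMv0 : M (0, 1) = v 0 := by rw [hMst]; simp
  -- the coordinate lattices
  set Λ₁ : AddSubgroup ℂ := AddSubgroup.comap (AddMonoidHom.inl ℂ ℂ)
    (AddSubgroup.comap M.toLinearMap.toAddMonoidHom Γ) with hΛ₁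
  set Λ₂ : AddSubgroup ℂ := AddSubgroup.comap (AddMonoidHom.inr ℂ ℂ)
    (AddSubgroup.comap M.toLinearMap.toAddMonoidHom Γ) with hΛ₂
  have hΛ₁mem : ∀ z : ℂ, z ∈ Λ₁ ↔ M (z, 0) ∈ Γ := fun z => Iff.rfl
  have hΛ₂mem : ∀ w : ℂ, w ∈ Λ₂ ↔ M (0, w) ∈ Γ := fun w => Iff.rfl
  -- product structure of Γ in the coordinates
  have hprod : ∀ z w : ℂ, M (z, w) ∈ Γ ↔ z ∈ Λ₁ ∧ w ∈ Λ₂ := by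
    intro z w
    constructor
    · intro hx
      obtain ⟨s, t, hst, hsΓ, htΓ⟩ := hsplit 1 0 (by decide) _ hx
      have : M (z, w) = M (s, t) := by rw [hMst s t, hst]
      have hzw : (z, w) = (s, t) := M.injective this
      have hz : z = s := (Prod.mk.injEq _ _ _ _ ▸ hzw).1
      have hw : w = t := (Prod.mk.injEq _ _ _ _ ▸ hzw).2
      constructor
      · rw [hΛ₁mem, hz]
        have : M (s, 0) = s • v 1 := by rw [hMst]; simp
        rw [this]; exact hsΓ
      · rw [hΛ₂mem, hw]
        have : M (0, t) = t • v 0 := by rw [hMst]; simp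
        rw [this]; exact htΓ
    · rintro ⟨hz, hw⟩
      have : M (z, w) = M (z, 0) + M (0, w) := by
        rw [← map_add]
        norm_num
      rw [this]
      exact AddSubgroup.add_mem _ ((hΛ₁mem z).mp hz) ((hΛ₂mem w).mp hw)
  -- coordinates of the two remaining lines
  set w2 : ℂ × ℂ := M.symm (v 2) with hw2
  set w3 : ℂ × ℂ := M.symm (v 3) with hw3
  have hMw2 : M w2 = v 2 := M.apply_symm_apply _
  have hMw3 : M w3 = v 3 := M.apply_symm_apply _
  -- w2, w3 have nonzero coordinates
  have hcoord : ∀ (u : ℂ × ℂ) (k : Fin 4), M u = v k → k ≠ 0 → k ≠ 1 →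
      u.1 ≠ 0 ∧ u.2 ≠ 0 := by
    intro u k hu hk0 hk1
    constructor
    · intro h1
      have : v k = u.2 • v 0 := by
        calc v k = M (u.1, u.2) := by rw [hu]
          _ = u.1 • v 1 + u.2 • v 0 := hMst _ _
          _ = u.2 • v 0 := by rw [h1]; simp
      have hmem : v k ∈ Submodule.span ℂ {v 0} :=
        (Submodule.mem_span_singleton).mpr ⟨u.2, this.symm⟩
      have hle : W k ≤ W 0 := by
        rw [hW k, hW 0]
        exact Submodule.span_le.mpr (Set.singleton_subset_iff.mpr hmem)
      exact hWne k 0 hk0 (Submodule.eq_of_le_of_finrank_eq hle (by rw [hrank, hrank]))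
    · intro h2
      have : v k = u.1 • v 1 := by
        calc v k = M (u.1, u.2) := by rw [hu]
          _ = u.1 • v 1 + u.2 • v 0 := hMst _ _
          _ = u.1 • v 1 := by rw [h2]; simp
      have hmem : v k ∈ Submodule.span ℂ {v 1} :=
        (Submodule.mem_span_singleton).mpr ⟨u.1, this.symm⟩
      have hle : W k ≤ W 1 := by
        rw [hW k, hW 1]
        exact Submodule.span_le.mpr (Set.singleton_subset_iff.mpr hmem)
      exact hWne k 1 hk1 (Submodule.eq_of_le_of_finrank_eq hle (by rw [hrank, hrank]))
  obtain ⟨hw21, hw22⟩ := hcoord w2 2 hMw2 (by decide) (by decide)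
  obtain ⟨hw31, hw32⟩ := hcoord w3 3 hMw3 (by decide) (by decide)
  set α : ℂ := w2.2 / w2.1 with hα
  set β : ℂ := w3.2 / w3.1 with hβ
  have hα0 : α ≠ 0 := div_ne_zero hw22 hw21
  have hβ0 : β ≠ 0 := div_ne_zero hw32 hw31
  have hs1 : ∀ s : ℂ, s • v 1 = M (s, 0) := by intro s; rw [hMst]; simp
  have hs0 : ∀ s : ℂ, s • v 0 = M (0, s) := by intro s; rw [hMst]; simp
  have hsmul : ∀ (wk : ℂ × ℂ) (k : Fin 4), M wk = v k → ∀ t : ℂ,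
      t • v k = M (t * wk.1, t * wk.2) := by
    intro wk k hk t
    rw [← hk, ← map_smul]
    congr 1
  -- multiplication and division relations between the two coordinate lattices
  have hgen : ∀ (k : Fin 4) (wk : ℂ × ℂ), M wk = v k → k ≠ 0 → k ≠ 1 →
      wk.1 ≠ 0 → wk.2 ≠ 0 →
      (∀ z ∈ Λ₁, (wk.2 / wk.1) * z ∈ Λ₂) ∧ (∀ w ∈ Λ₂, w / (wk.2 / wk.1) ∈ Λ₁) := by
    intro k wk hk hk0 hk1 hk01 hk02
    constructor
    · intro z hz
      obtain ⟨s, t, hst, hsΓ, htΓ⟩ := hsplit 0 k hk0.symm _ ((hΛ₁mem z).mp hz)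
      have h1 : M (z, (0:ℂ)) = M (t * wk.1, s + t * wk.2) := by
        rw [hst, hs0, hsmul wk k hk, ← map_add]
        congr 1
        apply Prod.ext <;> simp
      have heq : (z, (0:ℂ)) = (t * wk.1, s + t * wk.2) := M.injective h1
      have hz1 : z = t * wk.1 := congrArg Prod.fst heq
      have htΓ' : M (z, t * wk.2) ∈ Γ := by
        have := (hsmul wk k hk t) ▸ htΓ
        rwa [← hz1] at this
      have hval : t * wk.2 = (wk.2 / wk.1) * z := by
        rw [hz1]; field_simp
      rw [hval] at htΓ'
      have : M ((0:ℂ), (wk.2 / wk.1) * z) ∈ Γ := by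
        have hsub : M ((0:ℂ), (wk.2 / wk.1) * z) =
            M (z, (wk.2 / wk.1) * z) - M (z, (0:ℂ)) := by
          rw [← map_sub]
          congr 1
          apply Prod.ext <;> simp
        rw [hsub]
        exact AddSubgroup.sub_mem _ htΓ' ((hΛ₁mem z).mp hz)
      exact (hΛ₂mem _).mpr this
    · intro w hw
      obtain ⟨s, t, hst, hsΓ, htΓ⟩ := hsplit 1 k hk1.symm _ ((hΛ₂mem w).mp hw)
      have h1 : M ((0:ℂ), w) = M (s + t * wk.1, t * wk.2) := by
        rw [hst, hs1, hsmul wk k hk, ← map_add]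
        congr 1
        apply Prod.ext <;> simp
      have heq : ((0:ℂ), w) = (s + t * wk.1, t * wk.2) := M.injective h1
      have hw1 : w = t * wk.2 := congrArg Prod.snd heq
      have htΓ' : M (t * wk.1, w) ∈ Γ := by
        have := (hsmul wk k hk t) ▸ htΓ
        rwa [← hw1] at this
      have hval : t * wk.1 = w / (wk.2 / wk.1) := by
        rw [hw1]; field_simp
      rw [hval] at htΓ'
      have : M (w / (wk.2 / wk.1), (0:ℂ)) ∈ Γ := by
        have hsub : M (w / (wk.2 / wk.1), (0:ℂ)) =
            M (w / (wk.2 / wk.1), w) - M ((0:ℂ), w) := by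
          rw [← map_sub]
          congr 1
          apply Prod.ext <;> simp
        rw [hsub]
        exact AddSubgroup.sub_mem _ htΓ' ((hΛ₂mem w).mp hw)
      exact (hΛ₁mem _).mpr this
  obtain ⟨hαmul, hαdiv⟩ := hgen 2 w2 hMw2 (by decide) (by decide) hw21 hw22
  obtain ⟨hβmul, hβdiv⟩ := hgen 3 w3 hMw3 (by decide) (by decide) hw31 hw32
  rw [← hα] at hαmul hαdiv
  rw [← hβ] at hβmul hβdiv
  -- μ = β / α is a multiplier of Λ₁
  set μ : ℂ := β / α with hμdef
  have hμ0 : μ ≠ 0 := div_ne_zero hβ0 hα0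
  have hμiff : ∀ z : ℂ, z ∈ Λ₁ ↔ μ * z ∈ Λ₁ := by
    intro z
    constructor
    · intro hz
      have h1 : β * z ∈ Λ₂ := hβmul z hz
      have h2 := hαdiv _ h1
      have : β * z / α = μ * z := by rw [hμdef]; field_simp
      rwa [this] at h2
    · intro hz
      have h1 : α * (μ * z) ∈ Λ₂ := hαmul _ hz
      have hval : α * (μ * z) = β * z := by rw [hμdef]; field_simp
      rw [hval] at h1
      have h2 := hβdiv _ h1
      have : β * z / β = z := by field_simp
      rwa [this] at h2
  -- spans of lines in coordinates
  have hmapW : ∀ (k : Fin 4) (wk : ℂ × ℂ), M wk = v k →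
      Submodule.map (M.symm : (ℂ × ℂ) →ₗ[ℂ] (ℂ × ℂ)) (W k) = Submodule.span ℂ {wk} := by
    intro k wk hk
    rw [hW k, Submodule.map_span, Set.image_singleton]
    congr 1
    rw [← hk]
    exact congrArg _ (M.symm_apply_apply wk)
  have hw2span : w2 = w2.1 • ((1 : ℂ), α) := by
    apply Prod.ext
    · simp
    · simp only [Prod.smul_snd, smul_eq_mul, hα]
      field_simp
  have hw3span : w3 = w3.1 • ((1 : ℂ), β) := by
    apply Prod.ext
    · simp
    · simp only [Prod.smul_snd, smul_eq_mul, hβ]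
      field_simp
  have hμ1 : μ ≠ 1 := by
    intro h
    have hαβ : α = β := by
      have : β = μ * α := by rw [hμdef]; field_simp
      rw [this, h, one_mul]
    have h23 : Submodule.map (M.symm : (ℂ × ℂ) →ₗ[ℂ] (ℂ × ℂ)) (W 2) =
        Submodule.map (M.symm : (ℂ × ℂ) →ₗ[ℂ] (ℂ × ℂ)) (W 3) := by
      rw [hmapW 2 w2 hMw2, hmapW 3 w3 hMw3, hw2span, hw3span, hαβ,
        Submodule.span_singleton_smul_eq (IsUnit.mk0 _ hw21) _,
        Submodule.span_singleton_smul_eq (IsUnit.mk0 _ hw31) _]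
    exact hWne 2 3 (by decide)
      (Submodule.map_injective_of_injective M.symm.injective h23)
  have h1μ0 : (1 : ℂ) - μ ≠ 0 := sub_ne_zero.mpr (Ne.symm hμ1)
  -- division by 1 - μ preserves Λ₁
  have h1μdiv : ∀ z ∈ Λ₁, z / (1 - μ) ∈ Λ₁ := by
    intro z hz
    obtain ⟨s, t, hst, hsΓ, htΓ⟩ := hsplit 2 3 (by decide) _ ((hΛ₁mem z).mp hz)
    have h1 : M (z, (0:ℂ)) = M (s * w2.1 + t * w3.1, s * w2.2 + t * w3.2) := by
      rw [hst, hsmul w2 2 hMw2, hsmul w3 3 hMw3, ← map_add]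
      congr 1
    have heq : (z, (0:ℂ)) = (s * w2.1 + t * w3.1, s * w2.2 + t * w3.2) := M.injective h1
    have e1 : s * w2.1 + t * w3.1 = z := (congrArg Prod.fst heq).symm
    have e2 : s * w2.2 + t * w3.2 = 0 := (congrArg Prod.snd heq).symm
    have hw2eq : w2.2 = α * w2.1 := by rw [hα]; field_simp
    have hw3eq : w3.2 = β * w3.1 := by rw [hβ]; field_simp
    have e2' : α * (s * w2.1) + β * (t * w3.1) = 0 := by
      linear_combination e2 - s * hw2eq - t * hw3eq
    have hT : t * w3.1 = z / (1 - μ) := by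
      rw [eq_div_iff h1μ0, hμdef]
      field_simp
      linear_combination α * e1 - e2'
    have htΛ : t * w3.1 ∈ Λ₁ := by
      have := (hsmul w3 3 hMw3 t) ▸ htΓ
      exact ((hprod _ _).mp this).1
    rwa [hT] at htΛ
  -- finiteness of bounded pieces of Λ₁
  have hfinΛ : ∀ R : ℝ, {z : ℂ | z ∈ Λ₁ ∧ ‖z‖ ≤ R}.Finite := by
    intro R
    set F : ℂ → ℂ × ℂ := fun z => M (z, 0) with hF
    have hFinj : Function.Injective F := by
      intro x y hxy
      exact congrArg Prod.fst (M.injective hxy)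
    set K : Set (ℂ × ℂ) := ⇑M '' (Metric.closedBall (0:ℂ) R ×ˢ ({0} : Set ℂ)) with hK
    have hKb : Bornology.IsBounded K := by
      have hlip := (LinearMap.toContinuousLinearMap (M : (ℂ × ℂ) →ₗ[ℂ] (ℂ × ℂ))).lipschitz
      have hbd : Bornology.IsBounded ((Metric.closedBall (0:ℂ) R) ×ˢ ({0} : Set ℂ)) :=
        (Metric.isBounded_closedBall).prod Bornology.isBounded_singleton
      exact hlip.isBounded_image hbd
    have hfin2 := lattice_inter_finite Γ b hbli hbset K hKb
    apply Set.Finite.subset (Set.Finite.preimage (Function.Injective.injOn hFinj) hfin2)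
    intro z hz
    refine ⟨hz.1, (z, 0), ⟨?_, rfl⟩, rfl⟩
    rw [Metric.mem_closedBall, Complex.dist_eq]
    simpa using hz.2
  -- minimal vector and multiplier analysis
  have h1Λ : (1 : ℂ) ∈ Λ₁ := by
    rw [hΛ₁mem, hMv1]
    exact hvΓ 1
  obtain ⟨m₀, hm₀Λ, hm₀0, hm₀min⟩ := exists_min_elt Λ₁ hfinΛ 1 h1Λ one_ne_zero
  have habsμ : ‖μ‖ = 1 :=
    abs_eq_one_of_mul_self Λ₁ hm₀Λ hm₀0 hm₀min hμ0 hμiff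
  have hsubiff : ∀ z : ℂ, z ∈ Λ₁ ↔ (1 - μ) * z ∈ Λ₁ := by
    intro z
    constructor
    · intro hz
      have : (1 - μ) * z = z - μ * z := by ring
      rw [this]
      exact AddSubgroup.sub_mem _ hz ((hμiff z).mp hz)
    · intro hz
      have := h1μdiv _ hz
      rwa [mul_div_cancel_left₀ _ h1μ0] at this
  have habs1μ : ‖1 - μ‖ = 1 :=
    abs_eq_one_of_mul_self Λ₁ hm₀Λ hm₀0 hm₀min h1μ0 hsubiff
  have hμτ : μ = tauC ∨ μ = 1 - tauC := mu_cases habsμ habs1μ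
  have hτstab : ∀ z ∈ Λ₁, tauC * z ∈ Λ₁ := by
    intro z hz
    rcases hμτ with h | h
    · rw [← h]
      exact (hμiff z).mp hz
    · have : tauC = 1 - μ := by rw [h]; ring
      rw [this]
      exact (hsubiff z).mp hz
  have hclass := lattice_classify Λ₁ hτstab hm₀Λ hm₀0 hm₀min
  have hΛ₂iff : ∀ w : ℂ, w ∈ Λ₂ ↔ w / α ∈ Λ₁ := by
    intro w
    constructor
    · exact hαdiv w
    · intro h
      have := hαmul _ h
      rwa [mul_div_cancel₀ _ hα0] at this
  -- the rescaling equivalence E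
  have hαm0 : α * m₀ ≠ 0 := mul_ne_zero hα0 hm₀0
  have hΔE : m₀ * (α * m₀) - 0 * 0 ≠ 0 := by
    simpa using mul_ne_zero hm₀0 hαm0
  set E : (ℂ × ℂ) ≃ₗ[ℂ] (ℂ × ℂ) := lequiv m₀ 0 (0 : ℂ) (α * m₀) hΔE with hE
  have hEapp : ∀ z w : ℂ, E (z, w) = (m₀ * z, α * (m₀ * w)) := by
    intro z w
    rw [hE, lequiv_apply]
    apply Prod.ext <;> simp <;> ring
  have hspansmul : ∀ (c : ℂ) (x : ℂ × ℂ), c ≠ 0 →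
      Submodule.span ℂ {c • x} = Submodule.span ℂ {x} :=
    fun c x hc => Submodule.span_singleton_smul_eq (IsUnit.mk0 c hc) x
  -- membership characterization after rescaling
  have hmem : ∀ z w : ℂ, M (E (z, w)) ∈ Γ ↔
      ((∃ p q : ℤ, z = (p : ℂ) + (q : ℂ) * tauC) ∧
       (∃ p q : ℤ, w = (p : ℂ) + (q : ℂ) * tauC)) := by
    intro z w
    rw [hEapp, hprod]
    constructor
    · rintro ⟨h1, h2⟩
      constructor
      · obtain ⟨p, q, hpq⟩ := (hclass _).mp h1
        refine ⟨p, q, ?_⟩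
        apply mul_left_cancel₀ hm₀0
        rw [hpq]; ring
      · have h2' : m₀ * w ∈ Λ₁ := by
          have := (hΛ₂iff _).mp h2
          rwa [mul_div_cancel_left₀ _ hα0] at this
        obtain ⟨p, q, hpq⟩ := (hclass _).mp h2'
        refine ⟨p, q, ?_⟩
        apply mul_left_cancel₀ hm₀0
        rw [hpq]; ring
    · rintro ⟨⟨p, q, hpq⟩, ⟨p', q', hpq'⟩⟩
      constructor
      · apply (hclass _).mpr
        exact ⟨p, q, by rw [hpq]; ring⟩
      · apply (hΛ₂iff _).mpr
        rw [mul_div_cancel_left₀ _ hα0]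
        apply (hclass _).mpr
        exact ⟨p', q', by rw [hpq']; ring⟩
  -- images of the four lines under E.symm ∘ M.symm
  have hEsymm : ∀ x y : ℂ × ℂ, E y = x → E.symm x = y := by
    intro x y h
    rw [← h, E.symm_apply_apply]
  have hE0 : E.symm ((0 : ℂ), (1 : ℂ)) = ((α * m₀)⁻¹ : ℂ) • ((0 : ℂ), (1 : ℂ)) := by
    apply hEsymm
    rw [show (((α * m₀)⁻¹ : ℂ) • ((0 : ℂ), (1 : ℂ)) : ℂ × ℂ) = ((0 : ℂ), (α * m₀)⁻¹) by
      apply Prod.ext <;> simp]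
    rw [hEapp]
    apply Prod.ext <;> simp
    field_simp
  have hE1 : E.symm ((1 : ℂ), (0 : ℂ)) = (m₀⁻¹ : ℂ) • ((1 : ℂ), (0 : ℂ)) := by
    apply hEsymm
    rw [show ((m₀⁻¹ : ℂ) • ((1 : ℂ), (0 : ℂ)) : ℂ × ℂ) = ((m₀⁻¹ : ℂ), (0 : ℂ)) by
      apply Prod.ext <;> simp]
    rw [hEapp]
    apply Prod.ext <;> simp
    field_simp
  have hE2 : E.symm ((1 : ℂ), α) = (m₀⁻¹ : ℂ) • ((1 : ℂ), (1 : ℂ)) := by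
    apply hEsymm
    rw [show ((m₀⁻¹ : ℂ) • ((1 : ℂ), (1 : ℂ)) : ℂ × ℂ) = ((m₀⁻¹ : ℂ), (m₀⁻¹ : ℂ)) by
      apply Prod.ext <;> simp]
    rw [hEapp]
    apply Prod.ext <;> simp <;> field_simp
  have hE3 : E.symm ((1 : ℂ), β) = (m₀⁻¹ : ℂ) • ((1 : ℂ), μ) := by
    apply hEsymm
    rw [show ((m₀⁻¹ : ℂ) • ((1 : ℂ), μ) : ℂ × ℂ) = ((m₀⁻¹ : ℂ), μ * m₀⁻¹) by
      apply Prod.ext <;> simp <;> ring]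
    rw [hEapp]
    apply Prod.ext <;> simp
    · field_simp
    · rw [hμdef]; field_simp
  -- spans of the four lines in rescaled coordinates
  have hMW0 : Submodule.map (M.symm : (ℂ × ℂ) →ₗ[ℂ] (ℂ × ℂ)) (W 0) =
      Submodule.span ℂ {((0 : ℂ), (1 : ℂ))} := hmapW 0 _ hMv0
  have hMW1 : Submodule.map (M.symm : (ℂ × ℂ) →ₗ[ℂ] (ℂ × ℂ)) (W 1) =
      Submodule.span ℂ {((1 : ℂ), (0 : ℂ))} := hmapW 1 _ hMv1
  have hMW2 : Submodule.map (M.symm : (ℂ × ℂ) →ₗ[ℂ] (ℂ × ℂ)) (W 2) =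
      Submodule.span ℂ {((1 : ℂ), α)} := by
    rw [hmapW 2 w2 hMw2, hw2span, hspansmul _ _ hw21]
  have hMW3 : Submodule.map (M.symm : (ℂ × ℂ) →ₗ[ℂ] (ℂ × ℂ)) (W 3) =
      Submodule.span ℂ {((1 : ℂ), β)} := by
    rw [hmapW 3 w3 hMw3, hw3span, hspansmul _ _ hw31]
  have hm₀inv : (m₀⁻¹ : ℂ) ≠ 0 := inv_ne_zero hm₀0
  have hαminv : ((α * m₀)⁻¹ : ℂ) ≠ 0 := inv_ne_zero hαm0
  rcases hμτ with hcase | hcase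
  · -- μ = τ : need an extra swap of coordinates
    have hSwΔ : (0 : ℂ) * 0 - 1 * 1 ≠ 0 := by norm_num
    set Sw : (ℂ × ℂ) ≃ₗ[ℂ] (ℂ × ℂ) := lequiv 0 1 1 0 hSwΔ with hSw
    have hSwapp : ∀ z w : ℂ, Sw (z, w) = (w, z) := by
      intro z w
      rw [hSw, lequiv_apply]
      apply Prod.ext <;> simp
    have hSwsymm : ∀ z w : ℂ, Sw.symm (z, w) = (w, z) := by
      intro z w
      have : Sw (w, z) = (z, w) := hSwapp w z
      rw [← this, Sw.symm_apply_apply]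
    refine ⟨(M.symm ≪≫ₗ E.symm) ≪≫ₗ Sw, ?_, ?_⟩
    · rw [exp_pi_third, LinearEquiv.image_eq_preimage_symm]
      ext p
      obtain ⟨z, w⟩ := p
      simp only [Set.mem_preimage, SetLike.mem_coe, Set.mem_setOf_eq]
      have hs : ((M.symm ≪≫ₗ E.symm) ≪≫ₗ Sw).symm (z, w) = M (E (w, z)) := by
        simp only [LinearEquiv.symm_trans_apply, LinearEquiv.symm_symm, hSwsymm]
      rw [hs, hmem]
      exact and_comm
    · rw [exp_pi_third]
      have hcomp : ∀ k : Fin 4,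
          Submodule.map (((M.symm ≪≫ₗ E.symm) ≪≫ₗ Sw) : (ℂ × ℂ) →ₗ[ℂ] (ℂ × ℂ)) (W k) =
          Submodule.map (Sw : (ℂ × ℂ) →ₗ[ℂ] (ℂ × ℂ))
            (Submodule.map (E.symm : (ℂ × ℂ) →ₗ[ℂ] (ℂ × ℂ))
              (Submodule.map (M.symm : (ℂ × ℂ) →ₗ[ℂ] (ℂ × ℂ)) (W k))) := by
        intro k
        rw [LinearEquiv.coe_trans, LinearEquiv.coe_trans, Submodule.map_comp,
          Submodule.map_comp]
      have hF0 : Submodule.map (((M.symm ≪≫ₗ E.symm) ≪≫ₗ Sw) : (ℂ × ℂ) →ₗ[ℂ] (ℂ × ℂ)) (W 0) =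
          Submodule.span ℂ {((1 : ℂ), (0 : ℂ))} := by
        rw [hcomp, hMW0, Submodule.map_span, Set.image_singleton, LinearEquiv.coe_coe, hE0,
          hspansmul _ _ hαminv, Submodule.map_span, Set.image_singleton, LinearEquiv.coe_coe, hSwapp]
      have hF1 : Submodule.map (((M.symm ≪≫ₗ E.symm) ≪≫ₗ Sw) : (ℂ × ℂ) →ₗ[ℂ] (ℂ × ℂ)) (W 1) =
          Submodule.span ℂ {((0 : ℂ), (1 : ℂ))} := by
        rw [hcomp, hMW1, Submodule.map_span, Set.image_singleton, LinearEquiv.coe_coe, hE1,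
          hspansmul _ _ hm₀inv, Submodule.map_span, Set.image_singleton, LinearEquiv.coe_coe, hSwapp]
      have hF2 : Submodule.map (((M.symm ≪≫ₗ E.symm) ≪≫ₗ Sw) : (ℂ × ℂ) →ₗ[ℂ] (ℂ × ℂ)) (W 2) =
          Submodule.span ℂ {((1 : ℂ), (1 : ℂ))} := by
        rw [hcomp, hMW2, Submodule.map_span, Set.image_singleton, LinearEquiv.coe_coe, hE2,
          hspansmul _ _ hm₀inv, Submodule.map_span, Set.image_singleton, LinearEquiv.coe_coe, hSwapp]
      have hF3 : Submodule.map (((M.symm ≪≫ₗ E.symm) ≪≫ₗ Sw) : (ℂ × ℂ) →ₗ[ℂ] (ℂ × ℂ)) (W 3) =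
          Submodule.span ℂ {(tauC, (1 : ℂ))} := by
        rw [hcomp, hMW3, Submodule.map_span, Set.image_singleton, LinearEquiv.coe_coe, hE3,
          hspansmul _ _ hm₀inv, Submodule.map_span, Set.image_singleton, LinearEquiv.coe_coe, hSwapp, hcase]
      ext S
      simp only [Set.mem_range, Set.mem_insert_iff, Set.mem_singleton_iff]
      constructor
      · rintro ⟨i, rfl⟩
        fin_cases i
        · exact Or.inr (Or.inl hF0)
        · exact Or.inl hF1
        · exact Or.inr (Or.inr (Or.inl hF2))
        · exact Or.inr (Or.inr (Or.inr hF3))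
      · rintro (h | h | h | h)
        · exact ⟨1, hF1.trans h.symm⟩
        · exact ⟨0, hF0.trans h.symm⟩
        · exact ⟨2, hF2.trans h.symm⟩
        · exact ⟨3, hF3.trans h.symm⟩
  · -- μ = 1 - τ : no swap needed
    refine ⟨M.symm ≪≫ₗ E.symm, ?_, ?_⟩
    · rw [exp_pi_third, LinearEquiv.image_eq_preimage_symm]
      ext p
      obtain ⟨z, w⟩ := p
      simp only [Set.mem_preimage, SetLike.mem_coe, Set.mem_setOf_eq]
      have hs : (M.symm ≪≫ₗ E.symm).symm (z, w) = M (E (z, w)) := by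
        simp only [LinearEquiv.symm_trans_apply, LinearEquiv.symm_symm]
      rw [hs, hmem]
    · rw [exp_pi_third]
      have hτ1 : Submodule.span ℂ {((1 : ℂ), μ)} = Submodule.span ℂ {(tauC, (1 : ℂ))} := by
        rw [hcase]
        have hsm : (tauC, (1 : ℂ)) = tauC • ((1 : ℂ), 1 - tauC) := by
          apply Prod.ext
          · simp
          · simp only [Prod.smul_snd, smul_eq_mul]
            linear_combination tauC_sq
        rw [hsm, hspansmul _ _ tauC_ne_zero]
      have hcomp : ∀ k : Fin 4,
          Submodule.map ((M.symm ≪≫ₗ E.symm) : (ℂ × ℂ) →ₗ[ℂ] (ℂ × ℂ)) (W k) =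
          Submodule.map (E.symm : (ℂ × ℂ) →ₗ[ℂ] (ℂ × ℂ))
            (Submodule.map (M.symm : (ℂ × ℂ) →ₗ[ℂ] (ℂ × ℂ)) (W k)) := by
        intro k
        rw [LinearEquiv.coe_trans, Submodule.map_comp]
      have hF0 : Submodule.map ((M.symm ≪≫ₗ E.symm) : (ℂ × ℂ) →ₗ[ℂ] (ℂ × ℂ)) (W 0) =
          Submodule.span ℂ {((0 : ℂ), (1 : ℂ))} := by
        rw [hcomp, hMW0, Submodule.map_span, Set.image_singleton, LinearEquiv.coe_coe, hE0, hspansmul _ _ hαminv]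
      have hF1 : Submodule.map ((M.symm ≪≫ₗ E.symm) : (ℂ × ℂ) →ₗ[ℂ] (ℂ × ℂ)) (W 1) =
          Submodule.span ℂ {((1 : ℂ), (0 : ℂ))} := by
        rw [hcomp, hMW1, Submodule.map_span, Set.image_singleton, LinearEquiv.coe_coe, hE1, hspansmul _ _ hm₀inv]
      have hF2 : Submodule.map ((M.symm ≪≫ₗ E.symm) : (ℂ × ℂ) →ₗ[ℂ] (ℂ × ℂ)) (W 2) =
          Submodule.span ℂ {((1 : ℂ), (1 : ℂ))} := by
        rw [hcomp, hMW2, Submodule.map_span, Set.image_singleton, LinearEquiv.coe_coe, hE2, hspansmul _ _ hm₀inv]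
      have hF3 : Submodule.map ((M.symm ≪≫ₗ E.symm) : (ℂ × ℂ) →ₗ[ℂ] (ℂ × ℂ)) (W 3) =
          Submodule.span ℂ {(tauC, (1 : ℂ))} := by
        rw [hcomp, hMW3, Submodule.map_span, Set.image_singleton, LinearEquiv.coe_coe, hE3,
          hspansmul _ _ hm₀inv, hτ1]
      ext S
      simp only [Set.mem_range, Set.mem_insert_iff, Set.mem_singleton_iff]
      constructor
      · rintro ⟨i, rfl⟩
        fin_cases i
        · exact Or.inl hF0
        · exact Or.inr (Or.inl hF1)
        · exact Or.inr (Or.inr (Or.inl hF2))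
        · exact Or.inr (Or.inr (Or.inr hF3))
      · rintro (h | h | h | h)
        · exact ⟨0, hF0.trans h.symm⟩
        · exact ⟨1, hF1.trans h.symm⟩
        · exact ⟨2, hF2.trans h.symm⟩
        · exact ⟨3, hF3.trans h.symm⟩
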